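/- Let Ω ⊆ ℝ^N be open, let Φ ∈ C²(ℝ^N) with Φ > 0 everywhere, and let u ∈ C¹(ℝ^N) be real-valued, compactly supported, and vanish on ℝ^N∖Ω. Then ∫_Ω Φ |∇u|² dx − ∫_Ω Φ^{−1} |∇(Φu)|² dx = ∫_Ω ( ΔΦ − |∇Φ|²/Φ ) u² dx; in particular ∫_Ω ( ΔΦ − |∇Φ|²/Φ ) u² dx ≤ ∫_Ω Φ |∇u|² dx. Consequently, if in addition a : Ω → ℝ, ε ∈ (0,1), h > 0, t ≥ 0, A ∈ C²(ℝ^N) satisfies ΔA(x) ≥ (1−ε) a(x) for all x ∈ Ω, and Φ(x) = exp( A(x) / ((h+2ε)(1+t)) ), then ((1−ε)/((h+2ε)(1+t))) ∫_Ω a(x) u² Φ dx ≤ ∫_Ω |∇u|² Φ dx. -/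

import Mathlib

open MeasureTheory

noncomputable section

/-- The Laplacian `Δφ = ∑ᵢ ∂²φ/∂xᵢ²`. -/
def lap {N : ℕ} (φ : EuclideanSpace ℝ (Fin N) → ℝ) (x : EuclideanSpace ℝ (Fin N)) : ℝ :=
  ∑ i : Fin N, fderiv ℝ (fun z => fderiv ℝ φ z (EuclideanSpace.single i 1)) x
    (EuclideanSpace.single i 1)

namespace Stmt13Aux

variable {N : ℕ}

lemma nsq (v : EuclideanSpace ℝ (Fin N)) : ‖v‖^2 = ∑ i, (v i)^2 := by
  rw [← real_inner_self_eq_norm_sq, PiLp.inner_apply]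
  simp [sq]

lemma inner_grad (f : EuclideanSpace ℝ (Fin N) → ℝ) (x v : EuclideanSpace ℝ (Fin N)) :
    (inner ℝ (gradient f x) v : ℝ) = fderiv ℝ f x v :=
  InnerProductSpace.toDual_symm_apply

lemma grad_apply (f : EuclideanSpace ℝ (Fin N) → ℝ) (x : EuclideanSpace ℝ (Fin N)) (i : Fin N) :
    gradient f x i = fderiv ℝ f x (EuclideanSpace.single i 1) := by
  rw [← inner_grad f x, EuclideanSpace.inner_single_right]
  simp

lemma norm_grad (f : EuclideanSpace ℝ (Fin N) → ℝ) (x : EuclideanSpace ℝ (Fin N)) :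
    ‖gradient f x‖ = ‖fderiv ℝ f x‖ := by
  rw [gradient]; exact LinearIsometryEquiv.norm_map _ _

lemma gradient_mul' {f g : EuclideanSpace ℝ (Fin N) → ℝ} {x : EuclideanSpace ℝ (Fin N)}
    (hf : DifferentiableAt ℝ f x) (hg : DifferentiableAt ℝ g x) :
    gradient (fun y => f y * g y) x = f x • gradient g x + g x • gradient f x := by
  simp only [gradient, fderiv_fun_mul hf hg, map_add, map_smulₛₗ, starRingEnd_apply, star_trivial]

lemma inner_grad_grad (f g : EuclideanSpace ℝ (Fin N) → ℝ) (x : EuclideanSpace ℝ (Fin N)) :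
    (inner ℝ (gradient f x) (gradient g x) : ℝ)
      = ∑ i, fderiv ℝ f x (EuclideanSpace.single i 1)
          * fderiv ℝ g x (EuclideanSpace.single i 1) := by
  rw [PiLp.inner_apply]
  congr 1; ext i
  rw [grad_apply, grad_apply]; simp; ring

lemma norm_grad_sq (f : EuclideanSpace ℝ (Fin N) → ℝ) (x : EuclideanSpace ℝ (Fin N)) :
    ‖gradient f x‖^2 = ∑ i, (fderiv ℝ f x (EuclideanSpace.single i 1))^2 := by
  rw [nsq]
  congr 1; ext i; rw [grad_apply]

lemma exp_norm_sq (a b : ℝ) (v w : EuclideanSpace ℝ (Fin N)) :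
    ‖a•v + b•w‖^2 = a^2*‖v‖^2 + 2*a*b*(inner ℝ v w : ℝ) + b^2*‖w‖^2 := by
  rw [norm_add_sq_real]
  simp [norm_smul, inner_smul_left, inner_smul_right, mul_pow, sq_abs]
  ring

lemma hcs_mono {u f : EuclideanSpace ℝ (Fin N) → ℝ} (hu : HasCompactSupport u)
    (h : ∀ x, u x = 0 → f x = 0) : HasCompactSupport f := by
  apply hu.mono
  intro x hx
  exact fun h0 => hx (h x h0)

/-- Core divergence identity via integration by parts:
`∫ (u² ∂ᵢᵢΦ + ∂ᵢ(u²) ∂ᵢΦ) = 0`. -/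
lemma ibp_coord (Φ : EuclideanSpace ℝ (Fin N) → ℝ) (hΦ : ContDiff ℝ 2 Φ)
    (u : EuclideanSpace ℝ (Fin N) → ℝ) (hu : ContDiff ℝ 1 u)
    (husupp : HasCompactSupport u) (i : Fin N) :
    ∫ x, ((u x)^2 * fderiv ℝ (fun z => fderiv ℝ Φ z (EuclideanSpace.single i 1)) x
          (EuclideanSpace.single i 1)
        + (2 * u x * fderiv ℝ u x (EuclideanSpace.single i 1))
          * fderiv ℝ Φ x (EuclideanSpace.single i 1)) = 0 := by
  set e : EuclideanSpace ℝ (Fin N) := EuclideanSpace.single i 1 with he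
  set pΦ : EuclideanSpace ℝ (Fin N) → ℝ := fun z => fderiv ℝ Φ z e with hpΦ
  have hudiff : Differentiable ℝ u := hu.differentiable one_ne_zero
  have hucont : Continuous u := hu.continuous
  have hpΦ1 : ContDiff ℝ 1 pΦ :=
    (ContinuousLinearMap.apply ℝ ℝ e).contDiff.comp (hΦ.fderiv_right (m := 1) (by norm_num))
  have hpΦc : Continuous pΦ := hpΦ1.continuous
  have hpΦd : Differentiable ℝ pΦ := hpΦ1.differentiable one_ne_zero
  have hpΦ'c : Continuous (fun x => fderiv ℝ pΦ x e) :=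
    (hpΦ1.continuous_fderiv one_ne_zero).clm_apply continuous_const
  have hu'c : Continuous (fun x => fderiv ℝ u x e) :=
    (hu.continuous_fderiv one_ne_zero).clm_apply continuous_const
  have hu2 : Differentiable ℝ (fun y => u y ^ 2) := by
    have : (fun y => u y ^ 2) = fun y => u y * u y := by ext y; ring
    rw [this]; exact hudiff.mul hudiff
  have hu2' : ∀ x, fderiv ℝ (fun y => u y ^ 2) x = (2 * u x) • fderiv ℝ u x := by
    intro x
    rw [show (fun y => u y ^ 2) = fun y => u y * u y from by ext y; ring,
      fderiv_fun_mul (hudiff x) (hudiff x)]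
    module
  -- integrabilities
  have I1 : Integrable (fun x => (u x)^2 * fderiv ℝ pΦ x e) := by
    apply Continuous.integrable_of_hasCompactSupport
    · exact (hucont.pow 2).mul hpΦ'c
    · exact hcs_mono husupp (fun x hx => by simp [hx])
  have I2 : Integrable (fun x => (2 * u x * fderiv ℝ u x e) * pΦ x) := by
    apply Continuous.integrable_of_hasCompactSupport
    · exact ((continuous_const.mul hucont).mul hu'c).mul hpΦc
    · exact hcs_mono husupp (fun x hx => by simp [hx])
  have I3 : Integrable (fun x => (u x)^2 * pΦ x) := by
    apply Continuous.integrable_of_hasCompactSupport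
    · exact (hucont.pow 2).mul hpΦc
    · exact hcs_mono husupp (fun x hx => by simp [hx])
  have I2' : Integrable (fun x => fderiv ℝ (fun y => u y ^ 2) x e * pΦ x) := by
    have : (fun x => fderiv ℝ (fun y => u y ^ 2) x e * pΦ x)
        = fun x => (2 * u x * fderiv ℝ u x e) * pΦ x := by
      ext x; rw [hu2' x]; simp [mul_assoc]
    rw [this]; exact I2
  have key : ∫ x, (u x)^2 * fderiv ℝ pΦ x e
      = - ∫ x, fderiv ℝ (fun y => u y ^ 2) x e * pΦ x :=
    integral_mul_fderiv_eq_neg_fderiv_mul_of_integrable I2' I1 I3 (fun x _ => hu2 x) (fun x _ => hpΦd x)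
  have key2 : ∫ x, fderiv ℝ (fun y => u y ^ 2) x e * pΦ x
      = ∫ x, (2 * u x * fderiv ℝ u x e) * pΦ x := by
    congr 1; ext x; rw [hu2' x]; simp [mul_assoc]
  rw [integral_add I1 I2, key, key2]
  ring

end Stmt13Aux

namespace Stmt13Aux

lemma hcs_mono' {β γ : Type*} [Zero β] [Zero γ] {u : EuclideanSpace ℝ (Fin N) → β}
    {f : EuclideanSpace ℝ (Fin N) → γ} (hu : HasCompactSupport u)
    (h : ∀ x, u x = 0 → f x = 0) : HasCompactSupport f := by
  apply hu.mono
  intro x hx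
  exact fun h0 => hx (h x h0)

lemma fderiv_apply_cont {f : EuclideanSpace ℝ (Fin N) → ℝ} (hf : ContDiff ℝ 1 f)
    (v : EuclideanSpace ℝ (Fin N)) : Continuous (fun x => fderiv ℝ f x v) :=
  (hf.continuous_fderiv one_ne_zero).clm_apply continuous_const

lemma pderiv2_cont {Φ : EuclideanSpace ℝ (Fin N) → ℝ} (hΦ : ContDiff ℝ 2 Φ) (i : Fin N) :
    Continuous (fun x => fderiv ℝ (fun z => fderiv ℝ Φ z (EuclideanSpace.single i 1)) x
      (EuclideanSpace.single i 1)) :=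
  fderiv_apply_cont ((ContinuousLinearMap.apply ℝ ℝ (EuclideanSpace.single i 1)).contDiff.comp
    (hΦ.fderiv_right (m := 1) (by norm_num))) _

lemma lap_cont {Φ : EuclideanSpace ℝ (Fin N) → ℝ} (hΦ : ContDiff ℝ 2 Φ) :
    Continuous (lap Φ) := by
  unfold lap
  exact continuous_finset_sum _ (fun i _ => pderiv2_cont hΦ i)

/-- `∫ (u² ΔΦ + 2u ⟪∇Φ, ∇u⟫) = 0` for compactly supported `u`. -/
lemma div_int_zero (Φ : EuclideanSpace ℝ (Fin N) → ℝ) (hΦ : ContDiff ℝ 2 Φ)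
    (u : EuclideanSpace ℝ (Fin N) → ℝ) (hu : ContDiff ℝ 1 u)
    (husupp : HasCompactSupport u) :
    ∫ x, ((u x)^2 * lap Φ x + 2 * u x * (inner ℝ (gradient Φ x) (gradient u x) : ℝ)) = 0 := by
  have hrw : (fun x => (u x)^2 * lap Φ x + 2 * u x * (inner ℝ (gradient Φ x) (gradient u x) : ℝ))
      = fun x => ∑ i : Fin N,
        ((u x)^2 * fderiv ℝ (fun z => fderiv ℝ Φ z (EuclideanSpace.single i 1)) x
            (EuclideanSpace.single i 1)
          + (2 * u x * fderiv ℝ u x (EuclideanSpace.single i 1))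
            * fderiv ℝ Φ x (EuclideanSpace.single i 1)) := by
    ext x
    rw [lap, inner_grad_grad, Finset.mul_sum, Finset.mul_sum, ← Finset.sum_add_distrib]
    congr 1; ext i; ring
  rw [hrw]
  have hint : ∀ i : Fin N, Integrable (fun x =>
      (u x)^2 * fderiv ℝ (fun z => fderiv ℝ Φ z (EuclideanSpace.single i 1)) x
          (EuclideanSpace.single i 1)
        + (2 * u x * fderiv ℝ u x (EuclideanSpace.single i 1))
          * fderiv ℝ Φ x (EuclideanSpace.single i 1)) := by
    intro i
    apply Continuous.integrable_of_hasCompactSupport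
    · exact ((hu.continuous.pow 2).mul (pderiv2_cont hΦ i)).add
        (((continuous_const.mul hu.continuous).mul (fderiv_apply_cont hu _)).mul
          (fderiv_apply_cont (hΦ.of_le one_le_two) _))
    · exact hcs_mono husupp (fun x hx => by simp [hx])
  rw [integral_finset_sum _ (fun i _ => hint i)]
  exact Finset.sum_eq_zero (fun i _ => ibp_coord Φ hΦ u hu husupp i)

end Stmt13Aux


set_option maxHeartbeats 1000000 in
open Stmt13Aux in
theorem stmt_13 (N : ℕ) (Ω : Set (EuclideanSpace ℝ (Fin N))) (hΩ : IsOpen Ω)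
    (Φ : EuclideanSpace ℝ (Fin N) → ℝ) (hΦ : ContDiff ℝ 2 Φ) (hΦpos : ∀ x, 0 < Φ x)
    (u : EuclideanSpace ℝ (Fin N) → ℝ) (hu : ContDiff ℝ 1 u)
    (husupp : HasCompactSupport u) (huz : ∀ x ∉ Ω, u x = 0) :
    ((∫ x in Ω, Φ x * ‖gradient u x‖ ^ 2)
        - (∫ x in Ω, (Φ x)⁻¹ * ‖gradient (fun y => Φ y * u y) x‖ ^ 2)
      = ∫ x in Ω, (lap Φ x - ‖gradient Φ x‖ ^ 2 / Φ x) * (u x) ^ 2)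
    ∧ ((∫ x in Ω, (lap Φ x - ‖gradient Φ x‖ ^ 2 / Φ x) * (u x) ^ 2)
        ≤ ∫ x in Ω, Φ x * ‖gradient u x‖ ^ 2)
    ∧ (∀ (a : EuclideanSpace ℝ (Fin N) → ℝ) (ε h t : ℝ)
        (A : EuclideanSpace ℝ (Fin N) → ℝ),
        ε ∈ Set.Ioo (0 : ℝ) 1 → 0 < h → 0 ≤ t → ContDiff ℝ 2 A →
        (∀ x ∈ Ω, (1 - ε) * a x ≤ lap A x) →
        (∀ x, Φ x = Real.exp (A x / ((h + 2 * ε) * (1 + t)))) →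
        ((1 - ε) / ((h + 2 * ε) * (1 + t))) * ∫ x in Ω, a x * (u x) ^ 2 * Φ x
          ≤ ∫ x in Ω, ‖gradient u x‖ ^ 2 * Φ x) := by
  set w : EuclideanSpace ℝ (Fin N) → ℝ := fun y => Φ y * u y with hw
  have hΦ1 : ContDiff ℝ 1 Φ := hΦ.of_le one_le_two
  have hΦd : Differentiable ℝ Φ := hΦ1.differentiable one_ne_zero
  have hud : Differentiable ℝ u := hu.differentiable one_ne_zero
  have hw1 : ContDiff ℝ 1 w := hΦ1.mul hu
  have hwsupp : HasCompactSupport w := husupp.mul_left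
  have hgradw : ∀ x, gradient w x = Φ x • gradient u x + u x • gradient Φ x :=
    fun x => gradient_mul' (hΦd x) (hud x)
  have cgu : Continuous (fun x => ‖gradient u x‖ ^ 2) := by
    have : (fun x => ‖gradient u x‖ ^ 2) = fun x => ‖fderiv ℝ u x‖ ^ 2 := by
      ext x; rw [norm_grad]
    rw [this]; exact ((hu.continuous_fderiv one_ne_zero).norm).pow 2
  have cgw : Continuous (fun x => ‖gradient w x‖ ^ 2) := by
    have : (fun x => ‖gradient w x‖ ^ 2) = fun x => ‖fderiv ℝ w x‖ ^ 2 := by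
      ext x; rw [norm_grad]
    rw [this]; exact ((hw1.continuous_fderiv one_ne_zero).norm).pow 2
  have cgΦ : Continuous (fun x => ‖gradient Φ x‖ ^ 2) := by
    have : (fun x => ‖gradient Φ x‖ ^ 2) = fun x => ‖fderiv ℝ Φ x‖ ^ 2 := by
      ext x; rw [norm_grad]
    rw [this]; exact ((hΦ1.continuous_fderiv one_ne_zero).norm).pow 2
  have cginner : Continuous (fun x => (inner ℝ (gradient Φ x) (gradient u x) : ℝ)) := by
    have : (fun x => (inner ℝ (gradient Φ x) (gradient u x) : ℝ))
        = fun x => ∑ i : Fin N, fderiv ℝ Φ x (EuclideanSpace.single i 1)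
            * fderiv ℝ u x (EuclideanSpace.single i 1) := by
      ext x; rw [inner_grad_grad]
    rw [this]
    exact continuous_finset_sum _ (fun i _ =>
      (fderiv_apply_cont hΦ1 _).mul (fderiv_apply_cont hu _))
  have hΦne : ∀ x, Φ x ≠ 0 := fun x => ne_of_gt (hΦpos x)
  have If1 : Integrable (fun x => Φ x * ‖gradient u x‖ ^ 2) := by
    apply Continuous.integrable_of_hasCompactSupport (hΦ.continuous.mul cgu)
    apply hcs_mono' (u := fderiv ℝ u) (husupp.fderiv (𝕜 := ℝ))
    intro x hx
    have hg : gradient u x = 0 := by unfold gradient; rw [hx]; exact map_zero _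
    simp [hg]
  have If2 : Integrable (fun x => (Φ x)⁻¹ * ‖gradient w x‖ ^ 2) := by
    apply Continuous.integrable_of_hasCompactSupport ((hΦ.continuous.inv₀ hΦne).mul cgw)
    apply hcs_mono' (u := fderiv ℝ w) (hwsupp.fderiv (𝕜 := ℝ))
    intro x hx
    have hg : gradient w x = 0 := by unfold gradient; rw [hx]; exact map_zero _
    simp [hg]
  have If3 : Integrable (fun x => (lap Φ x - ‖gradient Φ x‖ ^ 2 / Φ x) * (u x) ^ 2) := by
    apply Continuous.integrable_of_hasCompactSupport
      (((lap_cont hΦ).sub (cgΦ.div hΦ.continuous hΦne)).mul (hu.continuous.pow 2))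
    exact hcs_mono husupp (fun x hx => by simp [hx])
  have IfD : Integrable (fun x =>
      (u x)^2 * lap Φ x + 2 * u x * (inner ℝ (gradient Φ x) (gradient u x) : ℝ)) := by
    apply Continuous.integrable_of_hasCompactSupport
      (((hu.continuous.pow 2).mul (lap_cont hΦ)).add
        ((continuous_const.mul hu.continuous).mul cginner))
    exact hcs_mono husupp (fun x hx => by simp [hx])
  have hpt : ∀ x, Φ x * ‖gradient u x‖ ^ 2 - (Φ x)⁻¹ * ‖gradient w x‖ ^ 2
      = (lap Φ x - ‖gradient Φ x‖ ^ 2 / Φ x) * (u x) ^ 2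
        - ((u x)^2 * lap Φ x + 2 * u x * (inner ℝ (gradient Φ x) (gradient u x) : ℝ)) := by
    intro x
    rw [hgradw x, exp_norm_sq, real_inner_comm (gradient u x)]
    field_simp [hΦne x]
    ring
  have hvan1 : ∀ x ∉ Ω, Φ x * ‖gradient u x‖ ^ 2 - (Φ x)⁻¹ * ‖gradient w x‖ ^ 2 = 0 := by
    intro x hx
    have hux : u x = 0 := huz x hx
    rw [hgradw x, hux]
    simp only [zero_smul, add_zero, norm_smul, mul_pow, Real.norm_eq_abs, sq_abs]
    have hq : Φ x ^ 2 * ‖gradient u x‖ ^ 2 * (Φ x)⁻¹ = Φ x * ‖gradient u x‖ ^ 2 := by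
      field_simp [hΦne x]
    rw [mul_comm ((Φ x)⁻¹), hq, sub_self]
  have hvan3 : ∀ x ∉ Ω, (lap Φ x - ‖gradient Φ x‖ ^ 2 / Φ x) * (u x) ^ 2 = 0 := by
    intro x hx
    rw [huz x hx]; ring
  have part1 : (∫ x in Ω, Φ x * ‖gradient u x‖ ^ 2)
      - (∫ x in Ω, (Φ x)⁻¹ * ‖gradient w x‖ ^ 2)
      = ∫ x in Ω, (lap Φ x - ‖gradient Φ x‖ ^ 2 / Φ x) * (u x) ^ 2 := by
    rw [← integral_sub If1.integrableOn If2.integrableOn]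
    rw [setIntegral_eq_integral_of_forall_compl_eq_zero hvan1]
    rw [setIntegral_eq_integral_of_forall_compl_eq_zero hvan3]
    calc ∫ x, (Φ x * ‖gradient u x‖ ^ 2 - (Φ x)⁻¹ * ‖gradient w x‖ ^ 2)
        = ∫ x, ((lap Φ x - ‖gradient Φ x‖ ^ 2 / Φ x) * (u x) ^ 2
            - ((u x)^2 * lap Φ x + 2 * u x * (inner ℝ (gradient Φ x) (gradient u x) : ℝ))) := by
          congr 1; ext x; exact hpt x
      _ = (∫ x, (lap Φ x - ‖gradient Φ x‖ ^ 2 / Φ x) * (u x) ^ 2)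
            - ∫ x, ((u x)^2 * lap Φ x + 2 * u x * (inner ℝ (gradient Φ x) (gradient u x) : ℝ)) :=
          integral_sub If3 IfD
      _ = ∫ x, (lap Φ x - ‖gradient Φ x‖ ^ 2 / Φ x) * (u x) ^ 2 := by
          rw [div_int_zero Φ hΦ u hu husupp]; ring
  have part2 : (∫ x in Ω, (lap Φ x - ‖gradient Φ x‖ ^ 2 / Φ x) * (u x) ^ 2)
      ≤ ∫ x in Ω, Φ x * ‖gradient u x‖ ^ 2 := by
    have h2 : 0 ≤ ∫ x in Ω, (Φ x)⁻¹ * ‖gradient w x‖ ^ 2 :=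
      setIntegral_nonneg hΩ.measurableSet (fun x _ =>
        mul_nonneg (inv_nonneg.2 (hΦpos x).le) (by positivity))
    linarith [part1]
  refine ⟨part1, part2, ?_⟩
  intro a ε h t A hε hh ht hA ha hΦA
  set c : ℝ := (h + 2 * ε) * (1 + t) with hcdef
  have hc : 0 < c := mul_pos (by linarith [hε.1]) (by linarith)
  have hΦfd : ∀ x, HasFDerivAt Φ ((Φ x * c⁻¹) • fderiv ℝ A x) x := by
    intro x
    have h1 : HasFDerivAt (fun y => A y / c) (c⁻¹ • fderiv ℝ A x) x := by
      simpa [div_eq_inv_mul, smul_smul, mul_comm] using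
        ((hA.differentiable (by norm_num) x).hasFDerivAt.mul_const c⁻¹)
    have h2 := h1.exp
    have h3 : (Φ x * c⁻¹) • fderiv ℝ A x = Real.exp (A x / c) • c⁻¹ • fderiv ℝ A x := by
      rw [hΦA x, smul_smul]
    have h4 : Φ = fun y => Real.exp (A y / c) := funext hΦA
    rw [h3, h4]
    exact h2
  have hfdΦ : ∀ x, fderiv ℝ Φ x = (Φ x * c⁻¹) • fderiv ℝ A x := fun x => (hΦfd x).fderiv
  have hpA1 : ∀ i : Fin N, ContDiff ℝ 1 (fun z => fderiv ℝ A z (EuclideanSpace.single i 1)) :=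
    fun i => by
      exact (ContinuousLinearMap.apply ℝ ℝ (EuclideanSpace.single i 1)).contDiff.comp
        (hA.fderiv_right (m := 1) (by norm_num))
  have hsnd : ∀ (i : Fin N) (x : EuclideanSpace ℝ (Fin N)),
      fderiv ℝ (fun z => fderiv ℝ Φ z (EuclideanSpace.single i 1)) x (EuclideanSpace.single i 1)
      = (Φ x * c⁻¹) * fderiv ℝ (fun z => fderiv ℝ A z (EuclideanSpace.single i 1)) x
          (EuclideanSpace.single i 1)
        + (fderiv ℝ A x (EuclideanSpace.single i 1)) * c⁻¹
          * (Φ x * c⁻¹ * fderiv ℝ A x (EuclideanSpace.single i 1)) := by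
    intro i x
    have heq : (fun z => fderiv ℝ Φ z (EuclideanSpace.single i 1))
        = fun z => (Φ z * c⁻¹) * fderiv ℝ A z (EuclideanSpace.single i 1) := by
      ext z; rw [hfdΦ z]; simp
    have hd1 : DifferentiableAt ℝ (fun z => Φ z * c⁻¹) x := (hΦd x).mul_const c⁻¹
    have hd2 : DifferentiableAt ℝ (fun z => fderiv ℝ A z (EuclideanSpace.single i 1)) x :=
      (hpA1 i).differentiable one_ne_zero x
    have hmc : fderiv ℝ (fun z => Φ z * c⁻¹) x = c⁻¹ • fderiv ℝ Φ x :=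
      (((hΦd x).hasFDerivAt.mul_const c⁻¹)).fderiv
    rw [heq, fderiv_fun_mul hd1 hd2]
    rw [ContinuousLinearMap.add_apply, ContinuousLinearMap.smul_apply,
      ContinuousLinearMap.smul_apply, hmc, ContinuousLinearMap.smul_apply, hfdΦ x,
      ContinuousLinearMap.smul_apply]
    simp only [smul_eq_mul]
    ring
  have hlap : ∀ x, lap Φ x = Φ x * c⁻¹ * lap A x
      + Φ x * c⁻¹ * c⁻¹ * ∑ i : Fin N, (fderiv ℝ A x (EuclideanSpace.single i 1))^2 := by
    intro x
    rw [lap, lap, Finset.mul_sum, Finset.mul_sum, ← Finset.sum_add_distrib]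
    congr 1; ext i
    rw [hsnd i x]; ring
  have hng : ∀ x, ‖gradient Φ x‖^2
      = (Φ x * c⁻¹)^2 * ∑ i : Fin N, (fderiv ℝ A x (EuclideanSpace.single i 1))^2 := by
    intro x
    rw [norm_grad_sq, Finset.mul_sum]
    congr 1; ext i
    rw [hfdΦ x, ContinuousLinearMap.smul_apply, smul_eq_mul]
    ring
  have hkey : ∀ x, lap Φ x - ‖gradient Φ x‖ ^ 2 / Φ x = Φ x * c⁻¹ * lap A x := by
    intro x
    rw [hlap x, hng x]
    field_simp [hΦne x]
    ring
  have hfinal : ∫ x in Ω, Φ x * ‖gradient u x‖ ^ 2 = ∫ x in Ω, ‖gradient u x‖ ^ 2 * Φ x := by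
    congr 1; ext x; ring
  by_cases hint : IntegrableOn (fun x => a x * (u x) ^ 2 * Φ x) Ω volume
  · calc ((1 - ε) / c) * ∫ x in Ω, a x * (u x) ^ 2 * Φ x
        = ∫ x in Ω, ((1 - ε) / c) * (a x * (u x) ^ 2 * Φ x) := by
          rw [integral_const_mul]
      _ ≤ ∫ x in Ω, (lap Φ x - ‖gradient Φ x‖ ^ 2 / Φ x) * (u x) ^ 2 := by
          apply setIntegral_mono_on (hint.const_mul _) If3.integrableOn hΩ.measurableSet
          intro x hx
          rw [hkey x]
          have hnn : (0:ℝ) ≤ (u x)^2 * (Φ x * c⁻¹) :=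
            mul_nonneg (sq_nonneg _) (mul_nonneg (hΦpos x).le (inv_nonneg.2 hc.le))
          have h2 := mul_le_mul_of_nonneg_right (ha x hx) hnn
          calc ((1 - ε) / c) * (a x * (u x) ^ 2 * Φ x)
              = ((1 - ε) * a x) * ((u x)^2 * (Φ x * c⁻¹)) := by
                rw [div_eq_mul_inv]; ring
            _ ≤ lap A x * ((u x)^2 * (Φ x * c⁻¹)) := h2
            _ = Φ x * c⁻¹ * lap A x * (u x) ^ 2 := by ring
      _ ≤ ∫ x in Ω, Φ x * ‖gradient u x‖ ^ 2 := part2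
      _ = ∫ x in Ω, ‖gradient u x‖ ^ 2 * Φ x := hfinal
  · rw [integral_undef hint, mul_zero]
    apply setIntegral_nonneg hΩ.measurableSet
    intro x _
    exact mul_nonneg (by positivity) (hΦpos x).le
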